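/- Let (W, S) be a finite Coxeter system with S = {s_1,...,s_n}, and let δ be a permutation of {1,...,n} with Coxeter element s_δ = s_{δ(1)}···s_{δ(n)}. Let E_δ be the flag of the Coxeter complex Σ(W,S) given by the vertex sequence W^{δ(1)}, ..., W^{δ(n)}, where W^i is the subgroup generated by S∖{s_i}. Then T^n(E_δ) = L_{s_δ}(E_δ), where L_{s_δ} is the automorphism of Σ(W,S) induced by left multiplication by s_δ. -/

import Mathlib

open scoped Classical

variable {V : Type*}

/-- `C` is a facet (maximal face) of a pure rank-`n` complex: a face with `n` vertices. -/
def IsFacet (n : ℕ) (faces : Finset V → Prop) (C : Finset V) : Prop :=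
  faces C ∧ C.card = n

/-- `faces` describes a thin pure simplicial complex of rank `n` over the vertex set `V`:
it is downward closed, every singleton is a face, every face has at most `n` vertices and is
contained in a facet, and every ridge (face with `n - 1` vertices) lies in exactly two facets. -/
def IsThinComplex (n : ℕ) (faces : Finset V → Prop) : Prop :=
  (∀ v : V, faces {v}) ∧
  (∀ ⦃X Y : Finset V⦄, faces X → Y ⊆ X → faces Y) ∧
  (∀ ⦃X : Finset V⦄, faces X → X.card ≤ n) ∧
  (∀ ⦃X : Finset V⦄, faces X → ∃ C : Finset V, IsFacet n faces C ∧ X ⊆ C) ∧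
  (∀ ⦃R : Finset V⦄, faces R → R.card = n - 1 →
    {C : Finset V | IsFacet n faces C ∧ R ⊆ C}.ncard = 2)

/-- A flag, encoded by the ordered vertex sequence `x_0, …, x_{n-1}` determining it:
the chain of faces is `{x_0} ⊂ {x_0,x_1} ⊂ … ⊂ {x_0,…,x_{n-1}}`, the top being a facet. -/
def IsFlag (n : ℕ) (faces : Finset V → Prop) (F : List V) : Prop :=
  F.length = n ∧ F.Nodup ∧ faces F.toFinset

/-- `G = T(F)` for the zigzag operator `T = σ_{n-1} ∘ ⋯ ∘ σ_0`: if `F` is determined by the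
vertex sequence `x_0, x_1, …, x_{n-1}`, then `T(F)` is determined by `x_1, …, x_{n-1}, y` with
`y ≠ x_0`. -/
def TStep (n : ℕ) (faces : Finset V → Prop) (F G : List V) : Prop :=
  IsFlag n faces F ∧ IsFlag n faces G ∧
    ∃ y : V, G = F.tail ++ [y] ∧ F.head? ≠ some y

/-- A zigzag of length `l`: the orbit `F, T F, T² F, …` of the operator `T` on flags, recorded
as the sequence `i ↦ Tⁱ F`; it is `l`-periodic with `l` the minimal period. -/
def IsZigzag (n : ℕ) (faces : Finset V → Prop) (l : ℕ) (F : ℕ → List V) : Prop :=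
  0 < l ∧ (∀ i : ℕ, TStep n faces (F i) (F (i + 1))) ∧ (∀ i : ℕ, F (i + l) = F i) ∧
    ∀ m : ℕ, 0 < m → (∀ i : ℕ, F (i + m) = F i) → l ≤ m

/-- The set of flags of a zigzag together with those of its reverse zigzag; two zigzags are
identified (a zigzag is identified with its reverse, and with its cyclic shifts) exactly when
these sets coincide. -/
def ZigzagClass (F : ℕ → List V) : Set (List V) :=
  Set.range F ∪ Set.range fun i => (F i).reverse

/-- `G = σ_i(F)`: the flag `G` has the same `j`-faces as `F` for all `j ≠ i`, and a different
`i`-face (the `j`-face of the flag with vertex sequence `F` is `(F.take (j+1)).toFinset`). -/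
def SigmaStep (n : ℕ) (faces : Finset V → Prop) (i : ℕ) (F G : List V) : Prop :=
  IsFlag n faces F ∧ IsFlag n faces G ∧
    (∀ j : ℕ, j < n → j ≠ i → (G.take (j + 1)).toFinset = (F.take (j + 1)).toFinset) ∧
    (G.take (i + 1)).toFinset ≠ (F.take (i + 1)).toFinset

/-- `G = T_δ(F)` where `T_δ = σ_{δ(n-1)} ∘ ⋯ ∘ σ_{δ(0)}`. -/
def TDeltaStep (n : ℕ) (faces : Finset V → Prop) (δ : Equiv.Perm (Fin n))
    (F G : List V) : Prop :=
  ∃ c : ℕ → List V, c 0 = F ∧ c n = G ∧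
    ∀ i : Fin n, SigmaStep n faces (δ i) (c i) (c (i + 1))

/-- A generalized zigzag (δ-zigzag) of length `l`: the orbit of `T_δ` on flags. -/
def IsGenZigzag (n : ℕ) (faces : Finset V → Prop) (δ : Equiv.Perm (Fin n)) (l : ℕ)
    (F : ℕ → List V) : Prop :=
  0 < l ∧ (∀ i : ℕ, TDeltaStep n faces δ (F i) (F (i + 1))) ∧ (∀ i : ℕ, F (i + l) = F i) ∧
    ∀ m : ℕ, 0 < m → (∀ i : ℕ, F (i + m) = F i) → l ≤ m

/-- Adjacency in the facet-adjacency graph `Γ_{n-1}(Δ)`: two distinct facets meeting in a ridge. -/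
def FacetAdj (n : ℕ) (faces : Finset V → Prop) (C D : Finset V) : Prop :=
  IsFacet n faces C ∧ IsFacet n faces D ∧ C ≠ D ∧ (C ∩ D).card = n - 1

/-- `p 0, p 1, …, p m` is a path in the facet-adjacency graph. -/
def IsFacetPath (n : ℕ) (faces : Finset V → Prop) (m : ℕ) (p : ℕ → Finset V) : Prop :=
  ∀ i : ℕ, i < m → FacetAdj n faces (p i) (p (i + 1))

/-- The path distance in the facet-adjacency graph `Γ_{n-1}(Δ)`. -/
noncomputable def facetDist (n : ℕ) (faces : Finset V → Prop) (X Y : Finset V) : ℕ :=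
  sInf {m : ℕ | ∃ p : ℕ → Finset V, p 0 = X ∧ p m = Y ∧ IsFacetPath n faces m p}

/-- The complex is a chamber complex: the facet-adjacency graph is connected. -/
def ChamberConnected (n : ℕ) (faces : Finset V → Prop) : Prop :=
  ∀ C D : Finset V, IsFacet n faces C → IsFacet n faces D →
    ∃ (m : ℕ) (p : ℕ → Finset V), p 0 = C ∧ p m = D ∧ IsFacetPath n faces m p

/-- The standard parabolic subgroup `W^i = ⟨S ∖ {s_i}⟩` of a Coxeter system. -/
def coxParab {B : Type*} {W : Type*} [Group W] {M : CoxeterMatrix B}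
    (cs : CoxeterSystem M W) (i : B) : Subgroup W :=
  Subgroup.closure (cs.simple '' {j : B | j ≠ i})

/-- The vertex `w·W^i` of the Coxeter complex `Σ(W,S)`, as a subset of `W`. -/
def coxVertex {B : Type*} {W : Type*} [Group W] {M : CoxeterMatrix B}
    (cs : CoxeterSystem M W) (w : W) (i : B) : Set W :=
  (fun x => w * x) '' (coxParab cs i : Set W)

/-- Faces of the Coxeter complex `Σ(W,S)`: sets of vertices of the form
`{w·W^{i_1}, …, w·W^{i_k}}`. -/
def coxFaces {B : Type*} {W : Type*} [Group W] {M : CoxeterMatrix B}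
    (cs : CoxeterSystem M W) (X : Finset (Set W)) : Prop :=
  ∃ (w : W) (I : Finset B), X = I.image fun i => coxVertex cs w i


namespace CoxAux

variable {B : Type*} {W : Type*} [Group W] {M : CoxeterMatrix B} (cs : CoxeterSystem M W)

/-! ### The sign representation on `W × ℤˣ` -/

noncomputable def etaFun (i : B) : W × ℤˣ → W × ℤˣ :=
  fun p => (cs.simple i * p.1 * cs.simple i, if p.1 = cs.simple i then -p.2 else p.2)

lemma etaFun_cond_iff (i : B) (t : W) :
    cs.simple i * t * cs.simple i = cs.simple i ↔ t = cs.simple i := by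
  constructor
  · intro h
    have h2 : t = (cs.simple i)⁻¹ * (cs.simple i * t * cs.simple i) * (cs.simple i)⁻¹ := by
      group
    rw [h] at h2
    simpa [cs.inv_simple, cs.simple_mul_simple_cancel_left,
      cs.simple_mul_simple_cancel_right] using h2
  · rintro rfl
    exact cs.simple_mul_simple_cancel_right i

lemma etaFun_invol (i : B) : Function.Involutive (etaFun cs i) := by
  rintro ⟨t, ε⟩
  refine Prod.ext ?_ ?_
  · show cs.simple i * (cs.simple i * t * cs.simple i) * cs.simple i = t
    simp [mul_assoc, cs.simple_mul_simple_cancel_left, cs.simple_mul_simple_self]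
  · show (if cs.simple i * t * cs.simple i = cs.simple i
        then -(if t = cs.simple i then -ε else ε) else (if t = cs.simple i then -ε else ε)) = ε
    by_cases h : t = cs.simple i
    · rw [if_pos ((etaFun_cond_iff cs i t).mpr h), if_pos h, neg_neg]
    · rw [if_neg (fun hc => h ((etaFun_cond_iff cs i t).mp hc)), if_neg h]

noncomputable def eta (i : B) : Equiv.Perm (W × ℤˣ) := (etaFun_invol cs i).toPerm

lemma eta_apply (i : B) (t : W) (ε : ℤˣ) :
    eta cs i (t, ε) = (cs.simple i * t * cs.simple i, if t = cs.simple i then -ε else ε) := rfl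

lemma ris_cons (i : B) (ω : List B) :
    cs.rightInvSeq (i :: ω) =
      ((cs.wordProd ω)⁻¹ * cs.simple i * cs.wordProd ω) :: cs.rightInvSeq ω := rfl

lemma prod_eta_apply (ω : List B) (t : W) (ε : ℤˣ) :
    ((ω.map (eta cs)).prod) (t, ε) =
      (cs.wordProd ω * t * (cs.wordProd ω)⁻¹,
        (-1 : ℤˣ) ^ ((cs.rightInvSeq ω).count t) * ε) := by
  induction ω with
  | nil => simp
  | cons i ω ih =>
    rw [List.map_cons, List.prod_cons]
    have happ : ((eta cs i) * (ω.map (eta cs)).prod) (t, ε)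
        = (eta cs i) (((ω.map (eta cs)).prod) (t, ε)) := rfl
    rw [happ, ih, eta_apply, ris_cons]
    have hcond : (cs.wordProd ω * t * (cs.wordProd ω)⁻¹ = cs.simple i)
        ↔ t = (cs.wordProd ω)⁻¹ * cs.simple i * cs.wordProd ω := by
      constructor
      · intro h; rw [← h]; group
      · intro h; rw [h]; group
    refine Prod.ext ?_ ?_
    · show cs.simple i * (cs.wordProd ω * t * (cs.wordProd ω)⁻¹) * cs.simple i
        = cs.wordProd (i :: ω) * t * (cs.wordProd (i :: ω))⁻¹
      rw [cs.wordProd_cons, mul_inv_rev, cs.inv_simple]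
      group
    · show (if cs.wordProd ω * t * (cs.wordProd ω)⁻¹ = cs.simple i
          then -((-1 : ℤˣ) ^ ((cs.rightInvSeq ω).count t) * ε)
          else (-1 : ℤˣ) ^ ((cs.rightInvSeq ω).count t) * ε)
        = (-1 : ℤˣ) ^ ((((cs.wordProd ω)⁻¹ * cs.simple i * cs.wordProd ω) ::
            cs.rightInvSeq ω).count t) * ε
      rw [List.count_cons]
      by_cases h : t = (cs.wordProd ω)⁻¹ * cs.simple i * cs.wordProd ω
      · rw [if_pos (hcond.mpr h), if_pos (beq_iff_eq.mpr h.symm)]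
        rw [pow_succ, mul_assoc, neg_one_mul, mul_neg]
      · rw [if_neg (fun hc => h (hcond.mp hc)), if_neg (fun hc => h ((beq_iff_eq.mp hc).symm)),
          Nat.add_zero]


/-! ### The braid relation check -/

def wm (i j : B) : ℕ → List B
  | 0 => []
  | N+1 => i :: j :: wm i j N

lemma wm_prod (i j : B) (N : ℕ) :
    cs.wordProd (wm i j N) = (cs.simple i * cs.simple j) ^ N := by
  induction N with
  | zero => simp [wm]
  | succ N ih =>
    rw [wm, cs.wordProd_cons, cs.wordProd_cons, ih, pow_succ', mul_assoc]

lemma wm_perm (i j : B) (N : ℕ) :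
    (((wm i j N).map (eta cs)).prod) = (eta cs i * eta cs j) ^ N := by
  induction N with
  | zero => simp [wm]
  | succ N ih =>
    rw [wm, List.map_cons, List.map_cons, List.prod_cons, List.prod_cons, ih, pow_succ',
      mul_assoc]

lemma grp_step {G : Type*} [Group G] (a b : G) (ha : a⁻¹ = a) (hb : b⁻¹ = b) (m : ℕ) :
    (a * b)⁻¹ * ((b * a) ^ m * b) * (a * b) = (b * a) ^ (m + 2) * b := by
  have hq : (a * b)⁻¹ = b * a := by rw [mul_inv_rev, ha, hb]
  rw [hq]
  have h1 : b * a * ((b * a) ^ m * b) * (a * b)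
      = (b * a) * (b * a) ^ m * (b * (a * b)) := by simp only [mul_assoc]
  rw [h1, ← pow_succ', ← mul_assoc b a b, ← mul_assoc ((b*a)^(m+1)) (b*a) b, ← pow_succ]

lemma grp_conj_pow {G : Type*} [Group G] (a b : G) (ha : a⁻¹ = a) (hb : b⁻¹ = b) (N : ℕ) :
    ((a * b) ^ N)⁻¹ * b * (a * b) ^ N = (b * a) ^ (2 * N) * b := by
  induction N with
  | zero => simp
  | succ N ih =>
    have h1 : ((a * b) ^ (N+1))⁻¹ * b * (a * b) ^ (N+1)
        = (a * b)⁻¹ * ((((a * b) ^ N)⁻¹ * b * (a * b) ^ N)) * (a * b) := by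
      rw [pow_succ]
      simp only [mul_inv_rev, mul_assoc]
    rw [h1, ih, grp_step a b ha hb, show 2*(N+1) = 2*N+2 from by ring]

lemma grp_conj_pow' {G : Type*} [Group G] (a b : G) (ha : a⁻¹ = a) (hb : b⁻¹ = b) (N : ℕ) :
    (b * (a * b) ^ N)⁻¹ * a * (b * (a * b) ^ N) = (b * a) ^ (2 * N + 1) * b := by
  induction N with
  | zero =>
    simp only [Nat.mul_zero, Nat.zero_add, pow_zero, pow_one, mul_one, hb, mul_assoc]
  | succ N ih =>
    have h1 : (b * (a * b) ^ (N+1))⁻¹ * a * (b * (a * b) ^ (N+1))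
        = (a * b)⁻¹ * ((b * (a * b) ^ N)⁻¹ * a * (b * (a * b) ^ N)) * (a * b) := by
      rw [pow_succ]
      simp only [mul_inv_rev, mul_assoc]
    rw [h1, ih, grp_step a b ha hb, show 2*(N+1)+1 = (2*N+1)+2 from by ring]

lemma wm_ris (i j : B) (N : ℕ) :
    cs.rightInvSeq (wm i j N) =
      ((List.range (2 * N)).reverse).map
        (fun k => (cs.simple j * cs.simple i) ^ k * cs.simple j) := by
  induction N with
  | zero => simp [wm]
  | succ N ih =>
    have h2 : 2 * (N + 1) = (2 * N) + 1 + 1 := by ring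
    rw [wm, ris_cons, ris_cons, ih, h2, List.range_succ, List.range_succ]
    simp only [List.reverse_append, List.reverse_cons, List.reverse_nil, List.nil_append,
      List.cons_append, List.map_cons]
    congr 1
    · rw [cs.wordProd_cons, wm_prod]
      exact grp_conj_pow' (cs.simple i) (cs.simple j) (cs.inv_simple i) (cs.inv_simple j) N
    · congr 1
      rw [wm_prod]
      exact grp_conj_pow (cs.simple i) (cs.simple j) (cs.inv_simple i) (cs.inv_simple j) N

lemma wm_count_even (i j : B) (t : W) :
    Even ((cs.rightInvSeq (wm i j (M i j))).count t) := by
  rw [wm_ris, List.map_reverse, List.count_reverse]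
  have hsplit : List.range (2 * M i j) = List.range (M i j) ++
      (List.range (M i j)).map (fun k => M i j + k) := by
    rw [two_mul, List.range_add]
  rw [hsplit, List.map_append, List.count_append, List.map_map]
  have : ((List.range (M i j)).map
        ((fun k => (cs.simple j * cs.simple i) ^ k * cs.simple j) ∘ (fun k => M i j + k)))
      = (List.range (M i j)).map (fun k => (cs.simple j * cs.simple i) ^ k * cs.simple j) := by
    apply List.map_congr_left
    intro k _
    show (cs.simple j * cs.simple i) ^ (M i j + k) * cs.simple j = _
    rw [pow_add, cs.simple_mul_simple_pow' i j, one_mul]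
  rw [this]
  exact Even.add_self _

lemma eta_liftable : M.IsLiftable (eta cs) := by
  intro i j
  rw [← wm_perm]
  refine Equiv.ext ?_
  rintro ⟨t, ε⟩
  rw [prod_eta_apply]
  have hπ : cs.wordProd (wm i j (M i j)) = 1 := by
    rw [wm_prod]; exact cs.simple_mul_simple_pow i j
  rw [hπ, (wm_count_even cs i j t).neg_one_pow]
  simp

noncomputable def rho : W →* Equiv.Perm (W × ℤˣ) := cs.lift ⟨eta cs, eta_liftable cs⟩

lemma rho_simple (i : B) : rho cs (cs.simple i) = eta cs i :=
  cs.lift_apply_simple (eta_liftable cs) i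

lemma rho_wordProd (ω : List B) : rho cs (cs.wordProd ω) = ((ω.map (eta cs)).prod) := by
  induction ω with
  | nil => simp [cs.wordProd_nil]
  | cons i ω ih => rw [cs.wordProd_cons, map_mul, ih, List.map_cons, List.prod_cons, rho_simple]

noncomputable def sgn (w t : W) : ℤˣ := ((rho cs w) (t, 1)).2

lemma sgn_wordProd (ω : List B) (t : W) :
    sgn cs (cs.wordProd ω) t = (-1 : ℤˣ) ^ ((cs.rightInvSeq ω).count t) := by
  rw [sgn, rho_wordProd, prod_eta_apply, mul_one]

lemma rho_apply (w t : W) (ε : ℤˣ) :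
    (rho cs w) (t, ε) = (w * t * w⁻¹, (sgn cs w t) * ε) := by
  obtain ⟨ω, rfl⟩ := cs.wordProd_surjective w
  rw [rho_wordProd, prod_eta_apply, sgn_wordProd]

lemma sgn_mul (u v t : W) :
    sgn cs (u * v) t = sgn cs v t * sgn cs u (v * t * v⁻¹) := by
  have h1 : (rho cs (u * v)) (t, 1) = (rho cs u) ((rho cs v) (t, 1)) := by
    rw [map_mul]; rfl
  rw [sgn, h1, rho_apply cs v t 1, rho_apply cs u]
  show sgn cs u (v * t * v⁻¹) * (sgn cs v t * 1) = _
  rw [mul_one, mul_comm]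

lemma sgn_one (t : W) : sgn cs 1 t = 1 := by
  rw [sgn, map_one]; rfl

lemma sgn_simple_self (i : B) : sgn cs (cs.simple i) (cs.simple i) = -1 := by
  rw [sgn, rho_simple, eta_apply, if_pos rfl]

lemma sgn_refl_self {t : W} (ht : cs.IsReflection t) : sgn cs t t = -1 := by
  obtain ⟨v, i, rfl⟩ := ht
  have hA : v⁻¹ * (v * cs.simple i * v⁻¹) * v⁻¹⁻¹ = cs.simple i := by group
  have h1 : sgn cs ((v * cs.simple i) * v⁻¹) (v * cs.simple i * v⁻¹)
      = sgn cs v⁻¹ (v * cs.simple i * v⁻¹) * sgn cs (v * cs.simple i) (cs.simple i) := by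
    rw [sgn_mul, hA]
  have h2 : sgn cs (v * cs.simple i) (cs.simple i)
      = sgn cs (cs.simple i) (cs.simple i) * sgn cs v (cs.simple i) := by
    rw [sgn_mul]
    congr 2
    group
  have h4 := sgn_mul cs v v⁻¹ (v * cs.simple i * v⁻¹)
  rw [hA, mul_inv_cancel, sgn_one] at h4
  rw [h1, h2, sgn_simple_self]
  rcases Int.units_eq_one_or (sgn cs v⁻¹ (v * cs.simple i * v⁻¹)) with hx | hx <;>
    rcases Int.units_eq_one_or (sgn cs v (cs.simple i)) with hy | hy <;>
    rw [hx, hy] at h4 ⊢ <;>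
    first
      | decide
      | exact absurd h4 (by decide)


/-! ### Exchange property -/

lemma length_lt_of_sgn_neg {w t : W} (h : sgn cs w t = -1) :
    cs.length (w * t) < cs.length w := by
  obtain ⟨ω, hred, hw⟩ := cs.exists_reduced_word' w
  subst hw
  rw [sgn_wordProd] at h
  have hodd : Odd ((cs.rightInvSeq ω).count t) := by
    rcases Nat.even_or_odd ((cs.rightInvSeq ω).count t) with he | ho
    · rw [he.neg_one_pow] at h
      exact absurd h (by decide)
    · exact ho
  have hpos : 0 < (cs.rightInvSeq ω).count t := by
    rcases hodd with ⟨m, hm⟩; omega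
  have hmem : t ∈ cs.rightInvSeq ω := List.count_pos_iff.mp hpos
  obtain ⟨jdx, hj, hget⟩ := List.mem_iff_getElem.mp hmem
  have hjlen : jdx < ω.length := by
    have := cs.length_rightInvSeq ω
    omega
  have hgetD : (cs.rightInvSeq ω).getD jdx 1 = t := by
    rw [List.getD_eq_getElem?_getD, List.getElem?_eq_getElem hj, Option.getD_some, hget]
  have key := cs.wordProd_mul_getD_rightInvSeq ω jdx
  rw [hgetD] at key
  rw [key]
  calc cs.length (cs.wordProd (ω.eraseIdx jdx)) ≤ (ω.eraseIdx jdx).length :=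
        cs.length_wordProd_le _
    _ < ω.length := by rw [List.length_eraseIdx]; simp only [if_pos hjlen]; omega
    _ = cs.length (cs.wordProd ω) := hred.symm

lemma sgn_neg_of_length_lt {w t : W} (ht : cs.IsReflection t)
    (h : cs.length (w * t) < cs.length w) : sgn cs w t = -1 := by
  rcases Int.units_eq_one_or (sgn cs w t) with h1 | h1
  · exfalso
    have h2 : sgn cs (w * t) t = -1 := by
      have h3 : t * t * t⁻¹ = t := by rw [ht.mul_self, one_mul, ht.inv]
      rw [sgn_mul, h3, sgn_refl_self cs ht, h1, mul_one]
    have h4 := length_lt_of_sgn_neg cs h2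
    rw [mul_assoc, ht.mul_self, mul_one] at h4
    omega
  · exact h1

lemma left_exchange {ψ : List B} (i : B)
    (h : cs.length (cs.simple i * cs.wordProd ψ) < cs.length (cs.wordProd ψ)) :
    ∃ ψ' : List B, (∀ x ∈ ψ', x ∈ ψ) ∧ ψ'.length + 1 = ψ.length ∧
      cs.wordProd ψ' = cs.simple i * cs.wordProd ψ := by
  have hrev : cs.wordProd ψ.reverse = (cs.wordProd ψ)⁻¹ := cs.wordProd_reverse ψ
  have hlen1 : cs.length (cs.wordProd ψ.reverse * cs.simple i)
      < cs.length (cs.wordProd ψ.reverse) := by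
    rw [hrev]
    have e1 : (cs.wordProd ψ)⁻¹ * cs.simple i = (cs.simple i * cs.wordProd ψ)⁻¹ := by
      rw [mul_inv_rev, cs.inv_simple]
    rw [e1, cs.length_inv, cs.length_inv]
    exact h
  have hsgn : sgn cs (cs.wordProd ψ.reverse) (cs.simple i) = -1 :=
    sgn_neg_of_length_lt cs (cs.isReflection_simple i) hlen1
  rw [sgn_wordProd] at hsgn
  have hodd : Odd ((cs.rightInvSeq ψ.reverse).count (cs.simple i)) := by
    rcases Nat.even_or_odd ((cs.rightInvSeq ψ.reverse).count (cs.simple i)) with he | ho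
    · rw [he.neg_one_pow] at hsgn
      exact absurd hsgn (by decide)
    · exact ho
  have hpos : 0 < (cs.rightInvSeq ψ.reverse).count (cs.simple i) := by
    rcases hodd with ⟨m, hm⟩; omega
  have hmem : cs.simple i ∈ cs.rightInvSeq ψ.reverse := List.count_pos_iff.mp hpos
  obtain ⟨jdx, hj, hget⟩ := List.mem_iff_getElem.mp hmem
  have hjlen : jdx < ψ.reverse.length := by
    have := cs.length_rightInvSeq ψ.reverse
    omega
  have hgetD : (cs.rightInvSeq ψ.reverse).getD jdx 1 = cs.simple i := by
    rw [List.getD_eq_getElem?_getD, List.getElem?_eq_getElem hj, Option.getD_some, hget]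
  have key := cs.wordProd_mul_getD_rightInvSeq ψ.reverse jdx
  rw [hgetD, hrev] at key
  refine ⟨(ψ.reverse.eraseIdx jdx).reverse, ?_, ?_, ?_⟩
  · intro x hx
    rw [List.mem_reverse] at hx
    have := (List.eraseIdx_sublist ψ.reverse jdx).subset hx
    rwa [List.mem_reverse] at this
  · rw [List.length_reverse, List.length_eraseIdx, if_pos hjlen]
    rw [List.length_reverse] at hjlen ⊢
    omega
  · rw [cs.wordProd_reverse, ← key, mul_inv_rev, inv_inv, cs.inv_simple]

/-! ### Parabolic subgroups -/

def parab (J : Set B) : Subgroup W := Subgroup.closure (cs.simple '' J)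

lemma simple_mem_parab {J : Set B} {i : B} (h : i ∈ J) : cs.simple i ∈ parab cs J :=
  Subgroup.subset_closure ⟨i, h, rfl⟩

lemma wordProd_mem_parab {J : Set B} {ω : List B} (h : ∀ x ∈ ω, x ∈ J) :
    cs.wordProd ω ∈ parab cs J := by
  induction ω with
  | nil => rw [cs.wordProd_nil]; exact (parab cs J).one_mem
  | cons a l ih =>
    rw [cs.wordProd_cons]
    exact mul_mem (simple_mem_parab cs (h a List.mem_cons_self))
      (ih fun x hx => h x (List.mem_cons_of_mem a hx))

lemma exists_word_of_mem_parab {J : Set B} {w : W} (h : w ∈ parab cs J) :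
    ∃ ω : List B, (∀ x ∈ ω, x ∈ J) ∧ cs.wordProd ω = w := by
  induction h using Subgroup.closure_induction with
  | mem x hx =>
    obtain ⟨i, hi, rfl⟩ := hx
    exact ⟨[i], by simpa using hi, cs.wordProd_singleton i⟩
  | one => exact ⟨[], by simp, cs.wordProd_nil⟩
  | mul x y hx hy ihx ihy =>
    obtain ⟨ω₁, h₁, e₁⟩ := ihx
    obtain ⟨ω₂, h₂, e₂⟩ := ihy
    refine ⟨ω₁ ++ ω₂, ?_, by rw [cs.wordProd_append, e₁, e₂]⟩
    intro x hx
    rcases List.mem_append.mp hx with h' | h'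
    · exact h₁ x h'
    · exact h₂ x h'
  | inv x hx ihx =>
    obtain ⟨ω, h₁, e₁⟩ := ihx
    exact ⟨ω.reverse, fun x hx => h₁ x (List.mem_reverse.mp hx),
      by rw [cs.wordProd_reverse, e₁]⟩

lemma exists_reduced_word_subset {J : Set B} :
    ∀ (ω : List B), (∀ x ∈ ω, x ∈ J) →
    ∃ ψ, cs.IsReduced ψ ∧ (∀ x ∈ ψ, x ∈ J) ∧ cs.wordProd ψ = cs.wordProd ω := by
  intro ω
  induction ω with
  | nil => exact fun _ => ⟨[], by simp [CoxeterSystem.IsReduced], by simp, rfl⟩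
  | cons a ω ih =>
    intro hmem
    obtain ⟨ψ, hψred, hψmem, hψprod⟩ := ih (fun x hx => hmem x (List.mem_cons_of_mem a hx))
    rcases cs.length_simple_mul (cs.wordProd ψ) a with hup | hdown
    · refine ⟨a :: ψ, ?_, ?_, ?_⟩
      · show cs.length (cs.wordProd (a :: ψ)) = (a :: ψ).length
        rw [cs.wordProd_cons, hup, hψred, List.length_cons]
      · intro x hx
        rcases List.mem_cons.mp hx with rfl | h'
        · exact hmem x List.mem_cons_self
        · exact hψmem x h'
      · rw [cs.wordProd_cons, hψprod, cs.wordProd_cons]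
    · have hlt : cs.length (cs.simple a * cs.wordProd ψ) < cs.length (cs.wordProd ψ) := by
        omega
      obtain ⟨ψ', hsub, hlen, hprod⟩ := left_exchange cs a hlt
      refine ⟨ψ', ?_, fun x hx => hψmem x (hsub x hx),
        by rw [hprod, hψprod, cs.wordProd_cons]⟩
      show cs.length (cs.wordProd ψ') = ψ'.length
      rw [hprod]
      have := hψred
      unfold CoxeterSystem.IsReduced at this
      omega

lemma mem_of_simple_mem_parab (hinj : Function.Injective cs.simple) {J : Set B} {i : B}
    (h : cs.simple i ∈ parab cs J) : i ∈ J := by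
  obtain ⟨ω₀, hω₀, hprod₀⟩ := exists_word_of_mem_parab cs h
  obtain ⟨ψ, hred, hmem, hprod⟩ := exists_reduced_word_subset cs ω₀ hω₀
  have hlen : ψ.length = 1 := by
    have h1 : cs.length (cs.wordProd ψ) = ψ.length := hred
    rw [hprod, hprod₀, cs.length_simple] at h1
    omega
  obtain ⟨y, rfl⟩ := List.length_eq_one_iff.mp hlen
  have hy : cs.simple y = cs.simple i := by
    rw [← cs.wordProd_singleton y, hprod, hprod₀]
  have := hinj hy
  subst this
  exact hmem y (List.mem_singleton_self y)

lemma support_subset (hinj : Function.Injective cs.simple) {J : Set B} :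
    ∀ (ω : List B), cs.IsReduced ω → cs.wordProd ω ∈ parab cs J → ∀ x ∈ ω, x ∈ J := by
  intro ω
  induction ω with
  | nil => simp
  | cons a ω ih =>
    intro hred hmem x hx
    have hωred : cs.IsReduced ω := by
      have := CoxeterSystem.IsReduced.drop hred 1
      simpa using this
    have hcons : cs.simple a * cs.wordProd (a :: ω) = cs.wordProd ω := by
      rw [cs.wordProd_cons, cs.simple_mul_simple_cancel_left]
    have hlt : cs.length (cs.simple a * cs.wordProd (a :: ω))
        < cs.length (cs.wordProd (a :: ω)) := by
      rw [hcons, hωred, hred]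
      simp
    obtain ⟨ω₀, hω₀, hprod₀⟩ := exists_word_of_mem_parab cs hmem
    obtain ⟨ψ, hψred, hψmem, hψprod⟩ := exists_reduced_word_subset cs ω₀ hω₀
    have hlt' : cs.length (cs.simple a * cs.wordProd ψ) < cs.length (cs.wordProd ψ) := by
      rw [hψprod, hprod₀]
      exact hlt
    obtain ⟨ψ', hsub', hlen', hprod'⟩ := left_exchange cs a hlt'
    have hsw_mem : cs.simple a * cs.wordProd (a :: ω) ∈ parab cs J := by
      have : cs.simple a * cs.wordProd (a :: ω) = cs.wordProd ψ' := by
        rw [hprod', hψprod, hprod₀]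
      rw [this]
      exact wordProd_mem_parab cs (fun x hx => hψmem x (hsub' x hx))
    have hsa : cs.simple a ∈ parab cs J := by
      have heq : cs.simple a
          = (cs.simple a * cs.wordProd (a :: ω)) * (cs.wordProd (a :: ω))⁻¹ := by group
      rw [heq]
      exact mul_mem hsw_mem (inv_mem hmem)
    rcases List.mem_cons.mp hx with rfl | hx'
    · exact mem_of_simple_mem_parab cs hinj hsa
    · have hπ : cs.wordProd ω ∈ parab cs J := by
        rw [← hcons]
        exact hsw_mem
      exact ih hωred hπ x hx'

end CoxAux

namespace CoxAux

variable {B : Type*} {W : Type*} [Group W] {M : CoxeterMatrix B} (cs : CoxeterSystem M W)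

/-! ### Vertices of the Coxeter complex -/

lemma coxParab_eq (i : B) : coxParab cs i = parab cs {j : B | j ≠ i} := rfl

lemma mem_coxVertex_iff {w v : W} {i : B} :
    v ∈ coxVertex cs w i ↔ w⁻¹ * v ∈ coxParab cs i := by
  constructor
  · rintro ⟨x, hx, rfl⟩
    simpa [← mul_assoc] using hx
  · intro h
    exact ⟨w⁻¹ * v, h, by simp⟩

lemma coxVertex_eq_of {w v : W} {i : B} (h : w⁻¹ * v ∈ coxParab cs i) :
    coxVertex cs w i = coxVertex cs v i := by
  ext z
  rw [mem_coxVertex_iff, mem_coxVertex_iff]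
  constructor
  · intro hz
    have e : v⁻¹ * z = (w⁻¹ * v)⁻¹ * (w⁻¹ * z) := by group
    rw [e]
    exact mul_mem (inv_mem h) hz
  · intro hz
    have e : w⁻¹ * z = (w⁻¹ * v) * (v⁻¹ * z) := by group
    rw [e]
    exact mul_mem h hz

lemma coxVertex_eq_analyze {w v : W} {i j : B} (h : coxVertex cs w i = coxVertex cs v j) :
    w⁻¹ * v ∈ coxParab cs i ∧ coxParab cs i = coxParab cs j := by
  have hv : v ∈ coxVertex cs w i := by
    rw [h, mem_coxVertex_iff]
    simpa using (coxParab cs j).one_mem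
  rw [mem_coxVertex_iff] at hv
  refine ⟨hv, ?_⟩
  ext z
  constructor
  · intro hz
    have h1 : v * z ∈ coxVertex cs w i := by
      rw [mem_coxVertex_iff]
      have e : w⁻¹ * (v * z) = (w⁻¹ * v) * z := by group
      rw [e]
      exact mul_mem hv hz
    rw [h, mem_coxVertex_iff] at h1
    simpa [← mul_assoc] using h1
  · intro hz
    have h1 : v * z ∈ coxVertex cs v j := by
      rw [mem_coxVertex_iff]
      simpa [← mul_assoc] using hz
    rw [← h, mem_coxVertex_iff] at h1
    have e : z = (w⁻¹ * v)⁻¹ * (w⁻¹ * (v * z)) := by group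
    rw [e]
    exact mul_mem (inv_mem hv) h1

lemma coxParab_injective (hinj : Function.Injective cs.simple) {i j : B}
    (h : coxParab cs i = coxParab cs j) : i = j := by
  by_contra hne
  have h1 : cs.simple i ∈ coxParab cs j :=
    Subgroup.subset_closure ⟨i, hne, rfl⟩
  rw [← h, coxParab_eq] at h1
  exact mem_of_simple_mem_parab cs hinj h1 rfl

end CoxAux

section MainAux

open CoxAux

variable {n : ℕ} {W : Type*} [Group W] {M : CoxeterMatrix (Fin n)} (cs : CoxeterSystem M W)
  (δ : Equiv.Perm (Fin n))

lemma mem_inter_parabs (hinj : Function.Injective cs.simple) (k : Fin n)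
    {w : W} (h : ∀ j : Fin n, j ≠ k → w ∈ coxParab cs (δ j)) :
    w = 1 ∨ w = cs.simple (δ k) := by
  obtain ⟨ω, hred, hw⟩ := cs.exists_reduced_word' w
  have hlet : ∀ x ∈ ω, x = δ k := by
    intro x hx
    by_contra hne
    have hj : δ.symm x ≠ k := by
      intro hk
      exact hne (by rw [← hk, Equiv.apply_symm_apply])
    have hmem : cs.wordProd ω ∈ parab cs {m : Fin n | m ≠ δ (δ.symm x)} := by
      rw [← coxParab_eq, ← hw]
      exact h (δ.symm x) hj
    have := support_subset cs hinj ω hred hmem x hx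
    simp at this
  match ω, hred, hw, hlet with
  | [], _, hw, _ => exact Or.inl (by rw [hw, cs.wordProd_nil])
  | [a], _, hw, hlet =>
    right
    rw [hw, cs.wordProd_singleton, hlet a (List.mem_singleton_self a)]
  | (a :: b :: tl), hred, hw, hlet =>
    exfalso
    have ha : a = δ k := hlet a (by simp)
    have hb : b = δ k := hlet b (by simp)
    have hprod : cs.wordProd (a :: b :: tl) = cs.wordProd tl := by
      rw [cs.wordProd_cons, cs.wordProd_cons, ha, hb, cs.simple_mul_simple_cancel_left]
    have h1 : cs.length (cs.wordProd (a :: b :: tl)) ≤ tl.length := by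
      rw [hprod]
      exact cs.length_wordProd_le tl
    have h2 : cs.length (cs.wordProd (a :: b :: tl)) = tl.length + 2 := hred
    omega

/-- The list of indices `δ 0, δ 1, …, δ (n-1)`. -/
def DD : List (Fin n) := List.ofFn (fun j => δ j)

lemma DD_length : (DD δ).length = n := by simp [DD]

lemma wk_mem_parab (k : ℕ) (j : Fin n) (hkj : k ≤ (j : ℕ)) :
    cs.wordProd ((DD δ).take k) ∈ coxParab cs (δ j) := by
  rw [coxParab_eq]
  apply wordProd_mem_parab
  intro x hx
  obtain ⟨m, hm, hxm⟩ := List.mem_iff_getElem.mp hx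
  have hmk : m < k := by
    have := hm
    simp [DD] at this
    omega
  have hmn : m < n := by
    have := hm
    simp [DD] at this
    omega
  have hx' : x = δ ⟨m, hmn⟩ := by
    rw [← hxm, List.getElem_take]
    simp [DD]
  rw [hx']
  intro hcontra
  have := δ.injective hcontra
  have : m = (j : ℕ) := congrArg Fin.val this
  omega

lemma wk_inv_prod_mem_parab (k : ℕ) (j : Fin n) (hjk : (j : ℕ) < k) :
    (cs.wordProd ((DD δ).take k))⁻¹ * cs.wordProd (DD δ) ∈ coxParab cs (δ j) := by
  have hsplit : cs.wordProd (DD δ)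
      = cs.wordProd ((DD δ).take k) * cs.wordProd ((DD δ).drop k) := by
    rw [← cs.wordProd_append, List.take_append_drop]
  have e : (cs.wordProd ((DD δ).take k))⁻¹ * cs.wordProd (DD δ)
      = cs.wordProd ((DD δ).drop k) := by
    rw [hsplit]
    group
  rw [e, coxParab_eq]
  apply wordProd_mem_parab
  intro x hx
  obtain ⟨m, hm, hxm⟩ := List.mem_iff_getElem.mp hx
  have hkm : k + m < n := by
    have := hm
    simp [DD] at this
    omega
  have hx' : x = δ ⟨k + m, hkm⟩ := by
    rw [← hxm, List.getElem_drop]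
    simp [DD]
  rw [hx']
  intro hcontra
  have := δ.injective hcontra
  have : k + m = (j : ℕ) := congrArg Fin.val this
  omega

lemma facet_struct {X : Finset (Set W)} (hX : coxFaces cs X) (hcard : X.card = n) :
    ∃ v : W, X = Finset.univ.image (fun i : Fin n => coxVertex cs v i) := by
  obtain ⟨v, I, rfl⟩ := hX
  have h2 : n ≤ I.card := by
    have h3 := Finset.card_image_le (s := I) (f := fun i : Fin n => coxVertex cs v i)
    rw [hcard] at h3
    exact h3
  have hI : I = Finset.univ := Finset.eq_univ_of_card I (by
    have := Finset.card_le_univ I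
    simp only [Finset.card_univ, Fintype.card_fin] at this ⊢
    omega)
  exact ⟨v, by rw [hI]⟩

end MainAux


/-- In the Coxeter complex of a finite Coxeter system `(W,S)`, `|S| = n`, for any
permutation `δ` of `{1,…,n}` with Coxeter element `s_δ = s_{δ(1)} ⋯ s_{δ(n)}`, the flag `E_δ`
with vertex sequence `W^{δ(1)}, …, W^{δ(n)}` satisfies `T^n(E_δ) = L_{s_δ}(E_δ)`. -/
theorem stmt11 {n : ℕ} {W : Type*} [Group W] [Fintype W] {M : CoxeterMatrix (Fin n)}
    (cs : CoxeterSystem M W) (δ : Equiv.Perm (Fin n)) (c : ℕ → List (Set W))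
    (hc0 : c 0 = List.ofFn fun i : Fin n => coxVertex cs 1 (δ i))
    (hstep : ∀ i : ℕ, i < n → TStep n (coxFaces cs) (c i) (c (i + 1))) :
    c n = List.ofFn fun i : Fin n =>
      coxVertex cs ((List.ofFn fun j : Fin n => cs.simple (δ j)).prod) (δ i) := by
  classical
  by_cases hinj : Function.Injective cs.simple
  case neg =>
    exfalso
    rw [Function.not_injective_iff] at hinj
    obtain ⟨i, j, hsij, hne⟩ := hinj
    have npos : 0 < n := i.pos
    have htop : ∀ a b : Fin n, a ≠ b → cs.simple a = cs.simple b → coxParab cs a = ⊤ := by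
      intro a b hab hs
      rw [eq_top_iff, ← cs.subgroup_closure_range_simple]
      apply (Subgroup.closure_le _).mpr
      rintro x ⟨m, rfl⟩
      by_cases hm : m = a
      · subst hm
        rw [hs]
        exact Subgroup.subset_closure ⟨b, Ne.symm hab, rfl⟩
      · exact Subgroup.subset_closure ⟨m, hm, rfl⟩
    have hv : coxVertex cs (1 : W) i = coxVertex cs 1 j := by
      unfold coxVertex
      rw [htop i j hne hsij, htop j i (Ne.symm hne) hsij.symm]
    have hflag : IsFlag n (coxFaces cs) (c 0) := (hstep 0 npos).1
    have hnd := hflag.2.1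
    rw [hc0, List.nodup_ofFn] at hnd
    have heq : coxVertex cs (1 : W) (δ (δ.symm i)) = coxVertex cs 1 (δ (δ.symm j)) := by
      rw [Equiv.apply_symm_apply, Equiv.apply_symm_apply, hv]
    have hsymm := hnd heq
    apply hne
    have h2 := congrArg δ hsymm
    rwa [Equiv.apply_symm_apply, Equiv.apply_symm_apply] at h2
  case pos =>
    have hσ' : (List.ofFn fun j : Fin n => cs.simple (δ j)).prod = cs.wordProd (DD δ) := by
      simp only [CoxeterSystem.wordProd, DD, List.map_ofFn]
      rfl
    have main : ∀ k : ℕ, k ≤ n →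
        c k = (List.ofFn fun i : Fin n => coxVertex cs 1 (δ i)).drop k ++
          (List.ofFn fun i : Fin n => coxVertex cs (cs.wordProd (DD δ)) (δ i)).take k := by
      intro k
      induction k with
      | zero =>
        intro _
        simpa using hc0
      | succ k ih =>
        intro hk1
        have hk : k < n := hk1
        have hck := ih (Nat.le_of_lt hk)
        obtain ⟨hF, hG, y, hGeq, hy⟩ := hstep k hk
        have holdlen : (List.ofFn fun i : Fin n => coxVertex cs 1 (δ i)).length = n := by simp
        have hnewlen : (List.ofFn fun i : Fin n =>
            coxVertex cs (cs.wordProd (DD δ)) (δ i)).length = n := by simp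
        have hkf : k < (List.ofFn fun i : Fin n => coxVertex cs 1 (δ i)).length := by omega
        have holddrop : (List.ofFn fun i : Fin n => coxVertex cs 1 (δ i)).drop k
            = coxVertex cs 1 (δ ⟨k, hk⟩) ::
              (List.ofFn fun i : Fin n => coxVertex cs 1 (δ i)).drop (k + 1) := by
          rw [List.drop_eq_getElem_cons hkf]
          congr 1
          exact List.getElem_ofFn _
        have hctail : (c k).tail
            = (List.ofFn fun i : Fin n => coxVertex cs 1 (δ i)).drop (k + 1) ++
              (List.ofFn fun i : Fin n => coxVertex cs (cs.wordProd (DD δ)) (δ i)).take k := by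
          rw [hck, holddrop]
          rfl
        have hchead : (c k).head? = some (coxVertex cs 1 (δ ⟨k, hk⟩)) := by
          rw [hck, holddrop]
          rfl
        have hvold : ∀ j : Fin n, k ≤ (j : ℕ) →
            coxVertex cs (cs.wordProd ((DD δ).take k)) (δ j) = coxVertex cs 1 (δ j) := by
          intro j hj
          apply CoxAux.coxVertex_eq_of
          have h1 := inv_mem (wk_mem_parab cs δ k j hj)
          simpa using h1
        have hvnew : ∀ j : Fin n, (j : ℕ) < k →
            coxVertex cs (cs.wordProd ((DD δ).take k)) (δ j)
              = coxVertex cs (cs.wordProd (DD δ)) (δ j) := by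
          intro j hj
          exact CoxAux.coxVertex_eq_of cs (wk_inv_prod_mem_parab cs δ k j hj)
        have htailmem : ∀ j : Fin n, j ≠ ⟨k, hk⟩ →
            coxVertex cs (cs.wordProd ((DD δ).take k)) (δ j) ∈ (c k).tail := by
          intro j hj
          rw [hctail]
          rcases Nat.lt_or_ge (j : ℕ) k with hjk | hjk
          · rw [hvnew j hjk]
            apply List.mem_append_right
            rw [List.mem_iff_getElem]
            have hjlt : (j : ℕ) < ((List.ofFn fun i : Fin n =>
                coxVertex cs (cs.wordProd (DD δ)) (δ i)).take k).length := by
              simp only [List.length_take, hnewlen]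
              omega
            refine ⟨(j : ℕ), hjlt, ?_⟩
            rw [List.getElem_take, List.getElem_ofFn]
          · have hjk1 : k + 1 ≤ (j : ℕ) := by
              rcases Nat.lt_or_ge (j : ℕ) (k + 1) with h' | h'
              · exact absurd (Fin.ext (by omega : (j : ℕ) = k)) hj
              · exact h'
            rw [hvold j hjk]
            apply List.mem_append_left
            rw [List.mem_iff_getElem]
            have hlt : (j : ℕ) - (k + 1) < ((List.ofFn fun i : Fin n =>
                coxVertex cs 1 (δ i)).drop (k + 1)).length := by
              simp only [List.length_drop, holdlen]
              omega
            refine ⟨(j : ℕ) - (k + 1), hlt, ?_⟩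
            rw [List.getElem_drop, List.getElem_ofFn]
            have he : (⟨k + 1 + ((j : ℕ) - (k + 1)), by omega⟩ : Fin n) = j :=
              Fin.ext (by show k + 1 + ((j : ℕ) - (k + 1)) = (j : ℕ); omega)
            exact congrArg (fun z => coxVertex cs 1 (δ z)) he
        obtain ⟨hGlen, hGnd, hGface⟩ := hG
        have hGcard : (c (k + 1)).toFinset.card = n := by
          rw [List.toFinset_card_of_nodup hGnd, hGlen]
        obtain ⟨v, hv⟩ := facet_struct cs hGface hGcard
        have htailG : ∀ j : Fin n, j ≠ ⟨k, hk⟩ →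
            coxVertex cs (cs.wordProd ((DD δ).take k)) (δ j) ∈ (c (k + 1)).toFinset := by
          intro j hj
          rw [List.mem_toFinset, hGeq]
          exact List.mem_append_left _ (htailmem j hj)
        have hparab : ∀ j : Fin n, j ≠ (⟨k, hk⟩ : Fin n) →
            (cs.wordProd ((DD δ).take k))⁻¹ * v ∈ coxParab cs (δ j) := by
          intro j hj
          have h1 := htailG j hj
          replace h1 := Finset.mem_image.mp ((congrArg (fun s => coxVertex cs (cs.wordProd ((DD δ).take k)) (δ j) ∈ s) hv).mp
            (List.mem_toFinset.mpr (List.mem_toFinset.mp h1)))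
          obtain ⟨i0, -, hi0⟩ := h1
          obtain ⟨hmem0, hPeq⟩ := CoxAux.coxVertex_eq_analyze cs hi0
          have hieq : i0 = δ j := CoxAux.coxParab_injective cs hinj hPeq
          rw [hieq] at hmem0
          have h2 := inv_mem hmem0
          simpa using h2
        have hcase := mem_inter_parabs cs δ hinj ⟨k, hk⟩ hparab
        have hvagree : ∀ j : Fin n, j ≠ ⟨k, hk⟩ →
            coxVertex cs v (δ j) = coxVertex cs (cs.wordProd ((DD δ).take k)) (δ j) := by
          intro j hj
          apply CoxAux.coxVertex_eq_of
          rcases hcase with h1 | h1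
          · have hvu : v = cs.wordProd ((DD δ).take k) := by
              have h2 := congrArg (fun z => cs.wordProd ((DD δ).take k) * z) h1
              simpa using h2
            rw [hvu]
            simpa using (coxParab cs (δ j)).one_mem
          · have hvinvu : v⁻¹ * cs.wordProd ((DD δ).take k) = cs.simple (δ ⟨k, hk⟩) := by
              have h2 := congrArg (fun z : W => z⁻¹) h1
              simpa using h2
            rw [hvinvu]
            apply Subgroup.subset_closure
            exact ⟨δ ⟨k, hk⟩, fun hcontra => hj (δ.injective hcontra).symm, rfl⟩
        have hymem : y ∈ (c (k + 1)).toFinset := by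
          rw [List.mem_toFinset, hGeq]
          exact List.mem_append_right _ (List.mem_singleton_self y)
        replace hymem := Finset.mem_image.mp ((congrArg (fun s => y ∈ s) hv).mp
          (List.mem_toFinset.mpr (List.mem_toFinset.mp hymem)))
        obtain ⟨i0, -, hyi0⟩ := hymem
        have hynotin : ∀ z ∈ (c k).tail, z ≠ y := by
          intro z hz hzy
          have hnd2 := hGnd
          rw [hGeq, List.nodup_append] at hnd2
          exact hnd2.2.2 z hz z (by rw [hzy]; exact List.mem_singleton_self y) rfl
        have hi0 : i0 = δ ⟨k, hk⟩ := by
          by_contra hne0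
          have hj0 : δ.symm i0 ≠ (⟨k, hk⟩ : Fin n) := by
            intro h'
            have : i0 = δ (⟨k, hk⟩ : Fin n) := by rw [← h', Equiv.apply_symm_apply]
            exact hne0 this
          have hyy : y = coxVertex cs (cs.wordProd ((DD δ).take k)) (δ (δ.symm i0)) := by
            rw [← hvagree _ hj0, Equiv.apply_symm_apply]
            exact hyi0.symm
          exact (hynotin _ (htailmem _ hj0)) hyy.symm
        have hyval : y = coxVertex cs (cs.wordProd (DD δ)) (δ ⟨k, hk⟩) := by
          rcases hcase with h1 | h1
          · exfalso
            have hvu : v = cs.wordProd ((DD δ).take k) := by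
              have h2 := congrArg (fun z => cs.wordProd ((DD δ).take k) * z) h1
              simpa using h2
            apply hy
            rw [hchead]
            congr 1
            rw [← hyi0, hi0, hvu, hvold ⟨k, hk⟩ (le_refl k)]
          · have hvu : v = cs.wordProd ((DD δ).take k) * cs.simple (δ ⟨k, hk⟩) := by
              have h2 := congrArg (fun z => cs.wordProd ((DD δ).take k) * z) h1
              simpa using h2
            have htake1 : cs.wordProd ((DD δ).take (k + 1))
                = cs.wordProd ((DD δ).take k) * cs.simple (δ ⟨k, hk⟩) := by
              have hDk : (DD δ)[k]? = some (δ ⟨k, hk⟩) := by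
                rw [List.getElem?_eq_getElem (by rw [DD_length]; exact hk)]
                simp [DD]
              rw [List.take_succ, hDk, Option.toList_some, cs.wordProd_append,
                cs.wordProd_singleton]
            rw [← hyi0, hi0, hvu, ← htake1]
            apply CoxAux.coxVertex_eq_of
            exact wk_inv_prod_mem_parab cs δ (k + 1) ⟨k, hk⟩ (Nat.lt_succ_self k)
        rw [hGeq, hctail, hyval, List.append_assoc]
        congr 1
        have hnewk : (List.ofFn fun i : Fin n =>
              coxVertex cs (cs.wordProd (DD δ)) (δ i))[k]?
            = some (coxVertex cs (cs.wordProd (DD δ)) (δ ⟨k, hk⟩)) := by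
          rw [List.getElem?_eq_getElem (by rw [hnewlen]; exact hk)]
          rw [List.getElem_ofFn]
        rw [List.take_succ, hnewk, Option.toList_some]
    have hfin := main n le_rfl
    rw [hσ', hfin, List.drop_of_length_le (by simp), List.take_of_length_le (by simp),
      List.nil_append]
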